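/- The Stern–Brocot labelling is injective as a map to fractions: if w and w' are finite Boolean lists with StBr(w) = (r,s) and StBr(w') = (r',s'), and r·s' = r'·s, then w = w'. Consequently the relation <_Q is a total order on the set of all paths. -/

import Mathlib

/-- One step of the Stern–Brocot state-passing recursion: the state is the pair
`(L, R)` of bounds; a `false` step (left child) replaces `R` by `L + R`, a `true`
step (right child) replaces `L` by `L + R`. -/
def sbStep : ((ℕ × ℕ) × (ℕ × ℕ)) → Bool → ((ℕ × ℕ) × (ℕ × ℕ))
  | (L, R), false => (L, (L.1 + R.1, L.2 + R.2))
  | (L, R), true  => ((L.1 + R.1, L.2 + R.2), R)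

/-- The bounds `(L(w), R(w))` of the node of the Stern–Brocot tree addressed by
the path `w`, starting from `((0,1), (1,0))` at the root. -/
def sbBounds (w : List Bool) : (ℕ × ℕ) × (ℕ × ℕ) :=
  w.foldl sbStep ((0, 1), (1, 0))

/-- The left godfather pair `L(w)`. -/
def sbL (w : List Bool) : ℕ × ℕ := (sbBounds w).1

/-- The right godfather pair `R(w)`. -/
def sbR (w : List Bool) : ℕ × ℕ := (sbBounds w).2

/-- The Stern–Brocot pair `StBr(w) = L(w) + R(w)` (componentwise sum). -/
def stBr (w : List Bool) : ℕ × ℕ :=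
  ((sbL w).1 + (sbR w).1, (sbL w).2 + (sbR w).2)

/-- The order `<_Q` on pairs of nonnegative integers:
`(r,s) <_Q (r',s')` iff `r·s' < r'·s`. -/
def ltQ (p q : ℕ × ℕ) : Prop := p.1 * q.2 < q.1 * p.2

/-- The order `≤_Q` on pairs of nonnegative integers:
`(r,s) ≤_Q (r',s')` iff `r·s' ≤ r'·s`. -/
def leQ (p q : ℕ × ℕ) : Prop := p.1 * q.2 ≤ q.1 * p.2

/-- The weight `|(r,s)| := r + s` of a pair. -/
def wtQ (p : ℕ × ℕ) : ℕ := p.1 + p.2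

def sbMid (s : (ℕ × ℕ) × (ℕ × ℕ)) : ℕ × ℕ := (s.1.1 + s.2.1, s.1.2 + s.2.2)

def sbDet (s : (ℕ × ℕ) × (ℕ × ℕ)) : Prop := s.1.1 * s.2.2 + 1 = s.2.1 * s.1.2

lemma sbDet_step (s : (ℕ × ℕ) × (ℕ × ℕ)) (b : Bool) (h : sbDet s) : sbDet (sbStep s b) := by
  obtain ⟨⟨a, b'⟩, ⟨c, d⟩⟩ := s
  cases b <;> simp [sbStep, sbDet] at * <;> nlinarith

lemma ltQ_trans_pos {p m q : ℕ × ℕ} (h1 : ltQ p m) (h2 : ltQ m q)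
    (hm1 : 0 < m.1) (hm2 : 0 < m.2) : ltQ p q := by
  unfold ltQ at *
  have key : (p.1 * q.2) * (m.1 * m.2) < (q.1 * p.2) * (m.1 * m.2) := by
    calc (p.1 * q.2) * (m.1 * m.2) = (p.1 * m.2) * (m.1 * q.2) := by ring
    _ < (m.1 * p.2) * (q.1 * m.2) := Nat.mul_lt_mul_of_lt_of_lt h1 h2
    _ = (q.1 * p.2) * (m.1 * m.2) := by ring
  exact lt_of_mul_lt_mul_right key (Nat.zero_le _)

lemma sbDet_pos {s : (ℕ × ℕ) × (ℕ × ℕ)} (h : sbDet s) : 0 < s.2.1 ∧ 0 < s.1.2 := by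
  unfold sbDet at h
  constructor <;> nlinarith

lemma sbMid_pos {s : (ℕ × ℕ) × (ℕ × ℕ)} (h : sbDet s) : 0 < (sbMid s).1 ∧ 0 < (sbMid s).2 := by
  obtain ⟨h1, h2⟩ := sbDet_pos h
  unfold sbMid; constructor <;> simp <;> omega

lemma bracket : ∀ (v : List Bool) (s), sbDet s →
    ltQ s.1 (sbMid (v.foldl sbStep s)) ∧ ltQ (sbMid (v.foldl sbStep s)) s.2 := by
  intro v
  induction v with
  | nil =>
    intro s h
    obtain ⟨⟨a, b⟩, ⟨c, d⟩⟩ := s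
    unfold sbDet at h
    simp [sbMid, ltQ] at *
    constructor <;> nlinarith
  | cons b v ih =>
    intro s h
    have h' : sbDet (sbStep s b) := sbDet_step s b h
    have ih' := ih (sbStep s b) h'
    have hpos := sbDet_pos h
    obtain ⟨⟨a, b''⟩, ⟨c, d⟩⟩ := s
    unfold sbDet at h
    simp at h hpos
    cases b with
    | false =>
      simp only [List.foldl_cons]
      refine ⟨ih'.1, ?_⟩
      refine ltQ_trans_pos ih'.2 ?_ ?_ ?_
      · show ltQ (a + c, b'' + d) (c, d); unfold ltQ; simp; nlinarith
      · simp [sbStep]; omega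
      · simp [sbStep]; omega
    | true =>
      simp only [List.foldl_cons]
      refine ⟨?_, ih'.2⟩
      refine ltQ_trans_pos ?_ ih'.1 ?_ ?_
      · show ltQ (a, b'') (a + c, b'' + d); unfold ltQ; simp; nlinarith
      · simp [sbStep]; omega
      · simp [sbStep]; omega

lemma comparable : ∀ (u v : List Bool) (s), sbDet s → u ≠ v →
    ltQ (sbMid (u.foldl sbStep s)) (sbMid (v.foldl sbStep s)) ∨
    ltQ (sbMid (v.foldl sbStep s)) (sbMid (u.foldl sbStep s)) := by
  intro u
  induction u with
  | nil =>
    intro v s h hne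
    match v, hne with
    | b :: v', _ =>
      have h' := sbDet_step s b h
      have hb := bracket v' (sbStep s b) h'
      cases b with
      | false =>
        right
        simp only [List.foldl_cons, List.foldl_nil]
        have : (sbStep s false).2 = sbMid s := by
          obtain ⟨⟨a, b''⟩, ⟨c, d⟩⟩ := s; simp [sbStep, sbMid]
        exact this ▸ hb.2
      | true =>
        left
        simp only [List.foldl_cons, List.foldl_nil]
        have : (sbStep s true).1 = sbMid s := by
          obtain ⟨⟨a, b''⟩, ⟨c, d⟩⟩ := s; simp [sbStep, sbMid]
        exact this ▸ hb.1
  | cons b u' ih =>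
    intro v s h hne
    match v with
    | [] =>
      have h' := sbDet_step s b h
      have hb := bracket u' (sbStep s b) h'
      cases b with
      | false =>
        left
        simp only [List.foldl_cons, List.foldl_nil]
        have : (sbStep s false).2 = sbMid s := by
          obtain ⟨⟨a, b''⟩, ⟨c, d⟩⟩ := s; simp [sbStep, sbMid]
        exact this ▸ hb.2
      | true =>
        right
        simp only [List.foldl_cons, List.foldl_nil]
        have : (sbStep s true).1 = sbMid s := by
          obtain ⟨⟨a, b''⟩, ⟨c, d⟩⟩ := s; simp [sbStep, sbMid]
        exact this ▸ hb.1
    | c :: v' =>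
      by_cases hbc : b = c
      · subst hbc
        have : u' ≠ v' := by intro he; exact hne (by rw [he])
        simpa only [List.foldl_cons] using ih v' (sbStep s b) (sbDet_step s b h) this
      · have hf := sbDet_step s false h
        have ht := sbDet_step s true h
        have hbf := bracket u' (sbStep s false) hf
        have hbt := bracket v' (sbStep s true) ht
        have e1 : (sbStep s false).2 = sbMid s := by
          obtain ⟨⟨a, b''⟩, ⟨c', d⟩⟩ := s; simp [sbStep, sbMid]
        have e2 : (sbStep s true).1 = sbMid s := by
          obtain ⟨⟨a, b''⟩, ⟨c', d⟩⟩ := s; simp [sbStep, sbMid]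
        have hmp := sbMid_pos h
        cases b with
        | false =>
          have hc : c = true := by cases c <;> simp_all
          subst hc
          left
          simp only [List.foldl_cons]
          exact ltQ_trans_pos (e1 ▸ hbf.2) (e2 ▸ (bracket v' (sbStep s true) ht).1) hmp.1 hmp.2
        | true =>
          have hc : c = false := by cases c <;> simp_all
          subst hc
          right
          simp only [List.foldl_cons]
          exact ltQ_trans_pos (e1 ▸ (bracket v' (sbStep s false) hf).2)
            (e2 ▸ (bracket u' (sbStep s true) ht).1) hmp.1 hmp.2

lemma sbDet_root : sbDet ((0, 1), (1, 0)) := by simp [sbDet]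

lemma stBr_eq (w : List Bool) : stBr w = sbMid (w.foldl sbStep ((0, 1), (1, 0))) := rfl

lemma sbDet_foldl : ∀ (w : List Bool) (s), sbDet s → sbDet (w.foldl sbStep s) := by
  intro w
  induction w with
  | nil => intro s h; exact h
  | cons b w ih => intro s h; exact ih _ (sbDet_step s b h)

lemma stBr_pos (w : List Bool) : 0 < (stBr w).1 ∧ 0 < (stBr w).2 := by
  rw [stBr_eq]
  exact sbMid_pos (sbDet_foldl w _ sbDet_root)

lemma stBr_comparable {w w' : List Bool} (h : w ≠ w') :
    ltQ (stBr w) (stBr w') ∨ ltQ (stBr w') (stBr w) := by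
  rw [stBr_eq, stBr_eq]
  exact comparable w w' _ sbDet_root h


/-- The Stern–Brocot labelling is injective as a map to fractions: if
`StBr(w) = (r,s)`, `StBr(w') = (r',s')` and `r·s' = r'·s` then `w = w'`;
consequently `<_Q` is a (strict) total order on the set of all paths. -/
theorem sternBrocot_injective_and_totalOrder :
    (∀ w w' : List Bool,
      (stBr w).1 * (stBr w').2 = (stBr w').1 * (stBr w).2 → w = w') ∧
    IsStrictTotalOrder (List Bool) (fun w w' => ltQ (stBr w) (stBr w')) := by
  constructor
  · intro w w' heq
    by_contra hne
    rcases stBr_comparable hne with h | h <;> unfold ltQ at h <;> omega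
  · refine { toTrichotomous := ⟨?_⟩,
             toIsStrictOrder := { toIrrefl := ⟨?_⟩, toIsTrans := ⟨?_⟩ } }
    · intro w w' h1 h2
      by_cases h : w = w'
      · exact h
      · rcases stBr_comparable h with h' | h'
        · exact absurd h' h1
        · exact absurd h' h2
    · intro w h; unfold ltQ at h; omega
    · intro a b c h1 h2
      exact ltQ_trans_pos h1 h2 (stBr_pos b).1 (stBr_pos b).2
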